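/- arXiv:1705.02993 — 2 statements merged into one kernel-verified Lean document; each statement's English description precedes it below -/
import Mathlib

section
/- Let p be a prime, d ≥ 2 and M ≥ 1 integers, and let F ⊆ (SL₂(ℤ/pℤ))^d be the set of all tuples S = (g₁, …, g_d) such that no nontrivial word of length at most M evaluates at S to id or −id. Then for every integer m ≥ 1 and every g ∈ SL₂(ℤ/pℤ) with g ≠ id and g ≠ −id, one has Σ_{S ∈ F} N(S, m, g) ≤ 2·|F|·(2d)^m / (p² − 1). -/
open MeasureTheory

noncomputable section

abbrev SL (n p : ℕ) := Matrix.SpecialLinearGroup (Fin n) (ZMod p)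

/-- Density of the Kesten–McKay law with parameter `2d`. -/
noncomputable def kmDensity (d : ℕ) (x : ℝ) : ℝ :=
  if x ^ 2 ≤ 4 * (2 * (d : ℝ) - 1) then
    2 * d * Real.sqrt (4 * (2 * (d : ℝ) - 1) - x ^ 2) /
      (2 * Real.pi * ((2 * (d : ℝ)) ^ 2 - x ^ 2))
  else 0

/-- The Kesten–McKay law with parameter `2d`, as a measure on `ℝ`. -/
noncomputable def kestenMcKay (d : ℕ) : Measure ℝ :=
  MeasureTheory.volume.withDensity fun x => ENNReal.ofReal (kmDensity d x)

/-- Discrepancy between two measures on ℝ. -/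
noncomputable def discrepancy (ν μ : Measure ℝ) : ℝ :=
  sSup {r : ℝ | ∃ a b : ℝ, a ≤ b ∧
    r = |(ν (Set.Icc a b)).toReal - (μ (Set.Icc a b)).toReal|}

/-- The element of the free group on `d` generators given by a word of length `m`. -/
def wordProd {d m : ℕ} (w : Fin m → Fin d × Bool) : FreeGroup (Fin d) :=
  (List.ofFn fun j => if (w j).2 then FreeGroup.of (w j).1 else (FreeGroup.of (w j).1)⁻¹).prod

/-- Evaluation of a word of length `m` in `d` letters at a tuple `S`. -/
def wordEval {G : Type*} [Group G] {d m : ℕ} (S : Fin d → G) (w : Fin m → Fin d × Bool) : G :=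
  (List.ofFn fun j => if (w j).2 then S (w j).1 else (S (w j).1)⁻¹).prod

/-- `N(d,m)`: the number of trivial words of length `m` in `d` letters. -/
noncomputable def Ntriv (d m : ℕ) : ℕ :=
  Nat.card {w : Fin m → Fin d × Bool // wordProd w = 1}

/-- `A_{π,S} = Σᵢ (π gᵢ + (π gᵢ)⁻¹)`. -/
noncomputable def Amat {G : Type*} [Group G] {n d : ℕ}
    (π : G →* Matrix.unitaryGroup (Fin n) ℂ) (S : Fin d → G) : Matrix (Fin n) (Fin n) ℂ :=
  ∑ i, ((π (S i) : Matrix (Fin n) (Fin n) ℂ) + ((π (S i))⁻¹ : Matrix (Fin n) (Fin n) ℂ))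

/-- Spectral probability measure of a Hermitian matrix. -/
noncomputable def specMeasure {n : ℕ} (A : Matrix (Fin n) (Fin n) ℂ) : Measure ℝ := by
  classical
  exact if hA : A.IsHermitian then
    (n : ENNReal)⁻¹ • ∑ j : Fin n, Measure.dirac (hA.eigenvalues j) else 0

/-- A unitary representation is irreducible if the only invariant subspaces are `⊥` and `⊤`. -/
def IsIrreducibleRep {G : Type*} [Group G] {n : ℕ}
    (π : G →* Matrix.unitaryGroup (Fin n) ℂ) : Prop :=
  ∀ W : Submodule ℂ (Fin n → ℂ),
    (∀ g : G, ∀ v ∈ W, (π g : Matrix (Fin n) (Fin n) ℂ).mulVec v ∈ W) → W = ⊥ ∨ W = ⊤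

/-- Number of eigenvalues of a Hermitian matrix with `|λ| > t`, with multiplicity. -/
noncomputable def excCount {n : ℕ} (A : Matrix (Fin n) (Fin n) ℂ) (t : ℝ) : ℕ := by
  classical
  exact if hA : A.IsHermitian then
    (Finset.univ.filter fun j : Fin n => t < |hA.eigenvalues j|).card else 0

end

/-- N(S, m, g): the number of nontrivial words of length m whose evaluation at S equals g. -/
noncomputable def NWord {G : Type*} [Group G] {d : ℕ} (S : Fin d → G) (m : ℕ) (g : G) : ℕ :=
  Nat.card {w : Fin m → Fin d × Bool // wordProd w ≠ 1 ∧ wordEval S w = g}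


section AuxWords

lemma wordEval_eq_lift {G : Type*} [Group G] {d m : ℕ} (S : Fin d → G)
    (w : Fin m → Fin d × Bool) : wordEval S w = FreeGroup.lift S (wordProd w) := by
  unfold wordEval wordProd
  rw [map_list_prod, List.map_ofFn]
  refine congrArg List.prod (congrArg List.ofFn (funext fun j => ?_))
  by_cases hb : (w j).2 <;> simp [hb]

lemma lift_conj {G : Type*} [Group G] {d : ℕ} (S : Fin d → G) (h : G)
    (u : FreeGroup (Fin d)) :
    FreeGroup.lift (fun i => h * S i * h⁻¹) u = h * FreeGroup.lift S u * h⁻¹ := by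
  induction u using FreeGroup.induction_on with
  | C1 => simp only [map_one]; group
  | of i =>
      have h1 : (pure i : FreeGroup (Fin d)) = FreeGroup.of i := rfl
      rw [FreeGroup.lift_apply_of, FreeGroup.lift_apply_of]
  | inv_of i ih => simp only [map_inv] at *; rw [ih]; group
  | mul x y ihx ihy => simp only [map_mul, ihx, ihy]; group

lemma wordEval_conj {G : Type*} [Group G] {d m : ℕ} (S : Fin d → G) (h : G)
    (w : Fin m → Fin d × Bool) :
    wordEval (fun i => h * S i * h⁻¹) w = h * wordEval S w * h⁻¹ := by
  rw [wordEval_eq_lift, wordEval_eq_lift, lift_conj]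

lemma NWord_conj {G : Type*} [Group G] {d : ℕ} (S : Fin d → G) (h g : G) (m : ℕ) :
    NWord (fun i => h * S i * h⁻¹) m (h * g * h⁻¹) = NWord S m g := by
  unfold NWord
  apply Nat.card_congr
  apply Equiv.subtypeEquivRight
  intro w
  rw [wordEval_conj]
  constructor
  · rintro ⟨h1, h2⟩
    rw [mul_assoc, mul_assoc] at h2
    exact ⟨h1, mul_right_cancel (mul_left_cancel h2)⟩
  · rintro ⟨h1, h2⟩
    exact ⟨h1, by rw [h2]⟩

lemma sum_NWord_le {G : Type*} [Group G] [Fintype G] {d : ℕ}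
    (S : Fin d → G) (m : ℕ) : ∑ g' : G, NWord S m g' ≤ (2 * d) ^ m := by
  classical
  have hN : ∀ g' : G, NWord S m g' =
      ((Finset.univ : Finset (Fin m → Fin d × Bool)).filter
        (fun w => wordProd w ≠ 1 ∧ wordEval S w = g')).card := by
    intro g'
    rw [NWord, Nat.card_eq_fintype_card, Fintype.card_subtype]
  calc ∑ g' : G, NWord S m g'
      = ((Finset.univ : Finset (Fin m → Fin d × Bool)).filter
          (fun w => wordProd w ≠ 1)).card := by
        rw [Finset.card_eq_sum_card_fiberwise
          (f := wordEval S) (t := Finset.univ) (fun x _ => Finset.mem_univ _)]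
        refine Finset.sum_congr rfl fun g' _ => ?_
        rw [hN, Finset.filter_filter]
    _ ≤ (Finset.univ : Finset (Fin m → Fin d × Bool)).card := Finset.card_filter_le _ _
    _ = (2 * d) ^ m := by
        simp [Fintype.card_fun, Fintype.card_prod, mul_comm]

end AuxWords

section SL2Aux

set_option maxRecDepth 10000

open scoped Classical

variable {p : ℕ} [Fact p.Prime]

local notation "M2" => Matrix (Fin 2) (Fin 2) (ZMod p)

noncomputable def betaF (g h : SL 2 p) : ZMod p :=
  if (g : M2) 0 1 ≠ 0 then (h : M2) 0 1 / (g : M2) 0 1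
  else if (g : M2) 1 0 ≠ 0 then (h : M2) 1 0 / (g : M2) 1 0
  else ((h : M2) 0 0 - (h : M2) 1 1) / ((g : M2) 0 0 - (g : M2) 1 1)

noncomputable def alphaF (g h : SL 2 p) : ZMod p :=
  (h : M2) 0 0 - betaF g h * (g : M2) 0 0

lemma nonscalar (g : SL 2 p) (hg1 : g ≠ 1) (hg2 : (g : M2) ≠ -1)
    (hb : (g : M2) 0 1 = 0) (hc : (g : M2) 1 0 = 0) : (g : M2) 0 0 ≠ (g : M2) 1 1 := by
  intro had
  have hdet : Matrix.det (g : M2) = 1 := g.prop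
  rw [Matrix.det_fin_two] at hdet
  rw [← had, hb, hc, mul_zero, sub_zero] at hdet
  rcases mul_self_eq_one_iff.1 hdet with h1 | h1
  · apply hg1
    apply Subtype.coe_injective
    show (g : M2) = ((1 : SL 2 p) : M2)
    rw [Matrix.SpecialLinearGroup.coe_one, Matrix.eta_fin_two (g : M2), Matrix.one_fin_two,
      hb, hc, ← had, h1]
  · apply hg2
    have hneg : (-1 : M2) = !![-1, 0; 0, -1] := by
      ext i j
      fin_cases i <;> fin_cases j <;> simp [Matrix.one_apply]
    rw [hneg, Matrix.eta_fin_two (g : M2), hb, hc, ← had, h1]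

lemma decomp (g : SL 2 p) (hg1 : g ≠ 1) (hg2 : (g : M2) ≠ -1) (h : SL 2 p)
    (hcomm : h * g = g * h) :
    (h : M2) = alphaF g h • (1 : M2) + betaF g h • (g : M2) := by
  have hm : (h : M2) * (g : M2) = (g : M2) * (h : M2) := by
    have := congrArg (fun x : SL 2 p => (x : M2)) hcomm
    simpa using this
  have e00 : ((h : M2) * g) 0 0 = ((g : M2) * h) 0 0 := by rw [hm]
  have e01 : ((h : M2) * g) 0 1 = ((g : M2) * h) 0 1 := by rw [hm]
  have e10 : ((h : M2) * g) 1 0 = ((g : M2) * h) 1 0 := by rw [hm]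
  simp only [Matrix.mul_apply, Fin.sum_univ_two] at e00 e01 e10
  rw [alphaF, betaF]
  split_ifs with hb hc
  · ext i j
    fin_cases i <;> fin_cases j <;>
      simp only [Matrix.add_apply, Matrix.smul_apply, smul_eq_mul, Fin.isValue] <;>
      rw [Matrix.one_apply] <;> norm_num
    · exact (div_mul_cancel₀ _ hb).symm
    · field_simp
      linear_combination -e00
    · field_simp
      linear_combination -e01
  · rw [not_not] at hb
    ext i j
    fin_cases i <;> fin_cases j <;>
      simp only [Matrix.add_apply, Matrix.smul_apply, smul_eq_mul, Fin.isValue] <;>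
      rw [Matrix.one_apply] <;> norm_num
    · have hx0 : (h : M2) 0 1 * (g : M2) 1 0 = 0 := by
        rw [hb] at e00; linear_combination e00
      rw [hb, mul_zero]
      exact (mul_eq_zero.1 hx0).resolve_right hc
    · exact (div_mul_cancel₀ _ hc).symm
    · field_simp
      linear_combination e10
  · rw [not_not] at hb hc
    have had : (g : M2) 0 0 ≠ (g : M2) 1 1 := nonscalar g hg1 hg2 hb hc
    have hsub : (g : M2) 0 0 - (g : M2) 1 1 ≠ 0 := sub_ne_zero.2 had
    ext i j
    fin_cases i <;> fin_cases j <;>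
      simp only [Matrix.add_apply, Matrix.smul_apply, smul_eq_mul, Fin.isValue] <;>
      rw [Matrix.one_apply] <;> norm_num
    · have hx0 : (h : M2) 0 1 * ((g : M2) 0 0 - (g : M2) 1 1) = 0 := by
        rw [hb] at e01; linear_combination -e01
      rw [hb, mul_zero]
      exact (mul_eq_zero.1 hx0).resolve_right hsub
    · have hy0 : (h : M2) 1 0 * ((g : M2) 0 0 - (g : M2) 1 1) = 0 := by
        rw [hc] at e10; linear_combination e10
      rw [hc, mul_zero]
      exact (mul_eq_zero.1 hy0).resolve_right hsub
    · field_simp [hsub]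
      ring

lemma card_comm_le (g : SL 2 p) (hg1 : g ≠ 1) (hg2 : (g : M2) ≠ -1) :
    ((Finset.univ : Finset (SL 2 p)).filter fun h => h * g = g * h).card ≤ 2 * p := by
  classical
  set s := (Finset.univ : Finset (SL 2 p)).filter (fun h => h * g = g * h) with hs
  have key : ∀ b ∈ s.image (betaF g), (s.filter fun h => betaF g h = b).card ≤ 2 := by
    intro b _
    set t := (g : M2) 0 0 + (g : M2) 1 1 with ht
    set P : Polynomial (ZMod p) :=
      Polynomial.C 1 * Polynomial.X ^ 2 + Polynomial.C (t * b) * Polynomial.X +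
        Polynomial.C (b ^ 2 - 1) with hP
    have hdeg : P.natDegree = 2 := Polynomial.natDegree_quadratic one_ne_zero
    have hP0 : P ≠ 0 := by intro h0; rw [h0] at hdeg; simp at hdeg
    have hdec : ∀ h ∈ s.filter (fun h => betaF g h = b),
        (h : M2) = alphaF g h • (1 : M2) + b • (g : M2) := by
      intro h hh
      rw [Finset.mem_filter] at hh
      obtain ⟨hh1, hh2⟩ := hh
      rw [hs, Finset.mem_filter] at hh1
      rw [← hh2]
      exact decomp g hg1 hg2 h hh1.2
    have hmem : ∀ h ∈ s.filter (fun h => betaF g h = b), alphaF g h ∈ P.roots.toFinset := by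
      intro h hh
      rw [Multiset.mem_toFinset, Polynomial.mem_roots hP0]
      have hdet : Matrix.det (h : M2) = 1 := h.prop
      rw [hdec h hh, Matrix.det_fin_two] at hdet
      simp only [Matrix.add_apply, Matrix.smul_apply, Matrix.one_apply, smul_eq_mul] at hdet
      norm_num at hdet
      have hdetg : Matrix.det (g : M2) = 1 := g.prop
      rw [Matrix.det_fin_two] at hdetg
      rw [Polynomial.IsRoot.def, hP]
      simp only [Polynomial.eval_add, Polynomial.eval_mul, Polynomial.eval_pow,
        Polynomial.eval_C, Polynomial.eval_X, ht]
      linear_combination hdet - b ^ 2 * hdetg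
    have hinj : Set.InjOn (alphaF g) (s.filter fun h => betaF g h = b) := by
      intro h1 hh1 h2 hh2 hEq
      have d1 := hdec h1 hh1
      have d2 := hdec h2 hh2
      apply Subtype.coe_injective
      show (h1 : M2) = (h2 : M2)
      rw [d1, d2, hEq]
    calc (s.filter fun h => betaF g h = b).card
        ≤ P.roots.toFinset.card := Finset.card_le_card_of_injOn (alphaF g) hmem hinj
      _ ≤ Multiset.card P.roots := P.roots.toFinset_card_le
      _ ≤ P.natDegree := P.card_roots'
      _ = 2 := hdeg
  calc s.card ≤ 2 * (s.image (betaF g)).card := Finset.card_le_mul_card_image s 2 key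
    _ ≤ 2 * Fintype.card (ZMod p) := by
        exact Nat.mul_le_mul_left 2 (Finset.card_le_univ (s.image (betaF g)))
    _ = 2 * p := by rw [ZMod.card]

noncomputable def slInj : ((ZMod p)ˣ × ZMod p × ZMod p) ⊕ ((ZMod p)ˣ × ZMod p) → SL 2 p :=
  fun s => match s with
  | Sum.inl (a, b, c) => ⟨!![(a : ZMod p), b; c, (1 + b * c) * (a : ZMod p)⁻¹], by
      rw [Matrix.det_fin_two_of]
      field_simp
      ring⟩
  | Sum.inr (b, d) => ⟨!![0, (b : ZMod p); -(b : ZMod p)⁻¹, d], by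
      rw [Matrix.det_fin_two_of]
      field_simp
      ring⟩

lemma slInj_injective : Function.Injective (slInj (p := p)) := by
  rintro (⟨a, b, c⟩ | ⟨b, d⟩) (⟨a', b', c'⟩ | ⟨b', d'⟩) h <;>
      have hm := congrArg (fun x : SL 2 p => (x : Matrix (Fin 2) (Fin 2) (ZMod p))) h <;>
      simp only [slInj] at hm
  · have h00 := (Matrix.ext_iff.2 hm 0) 0
    have h01 := (Matrix.ext_iff.2 hm 0) 1
    have h10 := (Matrix.ext_iff.2 hm 1) 0
    simp only [Matrix.cons_val', Matrix.cons_val_zero, Matrix.cons_val_one, Matrix.head_cons,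
      Matrix.empty_val', Matrix.cons_val_fin_one, Matrix.head_fin_const,
      Matrix.of_apply] at h00 h01 h10
    simp [Prod.ext_iff, Units.ext_iff, h00, h01, h10]
  · have h00 := (Matrix.ext_iff.2 hm 0) 0
    simp only [Matrix.cons_val', Matrix.cons_val_zero, Matrix.cons_val_one, Matrix.head_cons,
      Matrix.empty_val', Matrix.cons_val_fin_one, Matrix.head_fin_const,
      Matrix.of_apply] at h00
    exact absurd h00 a.ne_zero
  · have h00 := (Matrix.ext_iff.2 hm 0) 0
    simp only [Matrix.cons_val', Matrix.cons_val_zero, Matrix.cons_val_one, Matrix.head_cons,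
      Matrix.empty_val', Matrix.cons_val_fin_one, Matrix.head_fin_const,
      Matrix.of_apply] at h00
    exact absurd h00.symm a'.ne_zero
  · have h01 := (Matrix.ext_iff.2 hm 0) 1
    have h11 := (Matrix.ext_iff.2 hm 1) 1
    simp only [Matrix.cons_val', Matrix.cons_val_zero, Matrix.cons_val_one, Matrix.head_cons,
      Matrix.empty_val', Matrix.cons_val_fin_one, Matrix.head_fin_const,
      Matrix.of_apply] at h01 h11
    simp [Prod.ext_iff, Units.ext_iff, h01, h11]

lemma card_SL2_ge (hp : p.Prime) : p * (p ^ 2 - 1) ≤ Fintype.card (SL 2 p) := by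
  have := Fintype.card_le_of_injective _ (slInj_injective (p := p))
  rw [Fintype.card_sum, Fintype.card_prod, Fintype.card_prod, Fintype.card_prod] at this
  rw [ZMod.card_units_eq_totient, Nat.totient_prime hp, ZMod.card] at this
  obtain ⟨q, rfl⟩ := Nat.exists_eq_add_of_le hp.two_le
  have e1 : 2 + q - 1 = q + 1 := by omega
  have e2 : (2 + q) ^ 2 - 1 = q ^ 2 + 4 * q + 3 := by
    have : (2 + q) ^ 2 = q ^ 2 + 4 * q + 4 := by ring
    omega
  rw [e1] at this
  rw [e2]
  have e3 : (2 + q) * (q ^ 2 + 4 * q + 3)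
      = (q + 1) * ((2 + q) * (2 + q)) + (q + 1) * (2 + q) := by ring
  rw [e3]
  exact this

lemma card_conj_ge (g : SL 2 p) (hg1 : g ≠ 1) (hg2 : (g : M2) ≠ -1) :
    p ^ 2 - 1 ≤ 2 * ((Finset.univ : Finset (SL 2 p)).image fun h => h * g * h⁻¹).card := by
  classical
  set C := (Finset.univ : Finset (SL 2 p)).image (fun h => h * g * h⁻¹) with hC
  have h1 : (Finset.univ : Finset (SL 2 p)).card ≤ (2 * p) * C.card := by
    apply Finset.card_le_mul_card_image
    intro a ha
    obtain ⟨h₀, -, rfl⟩ := Finset.mem_image.1 ha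
    calc (Finset.univ.filter fun h : SL 2 p => h * g * h⁻¹ = h₀ * g * h₀⁻¹).card
        ≤ (Finset.univ.filter fun h : SL 2 p => h * g = g * h).card := by
          apply Finset.card_le_card_of_injOn (fun h => h₀⁻¹ * h)
          · intro h hh
            simp only [Finset.mem_coe, Finset.mem_filter, Finset.mem_univ, true_and] at hh ⊢
            have e := congrArg (fun x => h₀⁻¹ * x * h) hh
            simpa [mul_assoc] using e
          · intro h1 _ h2 _ hEq
            exact mul_left_cancel hEq
      _ ≤ 2 * p := card_comm_le g hg1 hg2
  have h2 := card_SL2_ge (p := p) Fact.out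
  rw [Finset.card_univ] at h1
  have h3 : p * (p ^ 2 - 1) ≤ p * (2 * C.card) := by
    calc p * (p ^ 2 - 1) ≤ Fintype.card (SL 2 p) := h2
      _ ≤ 2 * p * C.card := h1
      _ = p * (2 * C.card) := by ring
  exact Nat.le_of_mul_le_mul_left h3 (Fact.out : p.Prime).pos

noncomputable def negOne : SL 2 p :=
  ⟨-1, by rw [Matrix.det_neg]; simp⟩

lemma coe_negOne : ((negOne : SL 2 p) : M2) = -1 := rfl

lemma conj_eq_negOne_iff (h u : SL 2 p) :
    ((h * u * h⁻¹ : SL 2 p) : M2) = -1 ↔ (u : M2) = -1 := by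
  have hcen : ∀ k : SL 2 p, k * negOne * k⁻¹ = (negOne : SL 2 p) := by
    intro k
    apply Subtype.coe_injective
    show ((k * negOne * k⁻¹ : SL 2 p) : M2) = ((negOne : SL 2 p) : M2)
    rw [Matrix.SpecialLinearGroup.coe_mul, Matrix.SpecialLinearGroup.coe_mul]
    rw [show ((negOne : SL 2 p) : M2) = -1 from rfl]
    rw [mul_neg_one, neg_mul, ← Matrix.SpecialLinearGroup.coe_mul, mul_inv_cancel,
      Matrix.SpecialLinearGroup.coe_one]
  constructor
  · intro hc
    have h1 : h * u * h⁻¹ = negOne := Subtype.coe_injective hc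
    have h2 : u = h⁻¹ * negOne * h := by rw [← h1]; group
    have h3 : h⁻¹ * negOne * h = negOne := by simpa using hcen h⁻¹
    rw [h2, h3]
    exact coe_negOne
  · intro hc
    have h1 : u = negOne := Subtype.coe_injective hc
    rw [h1, hcen h]
    exact coe_negOne

lemma conj_one_iff {G : Type*} [Group G] (h u : G) : h * u * h⁻¹ = 1 ↔ u = 1 := by
  constructor
  · intro e
    have h2 : u = h⁻¹ * (h * u * h⁻¹) * h := by group
    rw [e] at h2
    rw [h2]
    group
  · intro e
    rw [e]
    group

end SL2Aux

/-- Let p be prime, d ≥ 2, M ≥ 1, and F the set of tuples S ∈ SL₂(ℤ/pℤ)^d such that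
no nontrivial word of length at most M evaluates at S to id or −id. Then for every m ≥ 1 and
every g ≠ ±id, Σ_{S ∈ F} N(S, m, g) ≤ 2·|F|·(2d)^m / (p² − 1). -/
theorem stmt8 (p : ℕ) (hp : p.Prime) (d M : ℕ) (hd : 2 ≤ d) (hM : 1 ≤ M)
    (F : Finset (Fin d → SL 2 p))
    (hF : ∀ S : Fin d → SL 2 p, S ∈ F ↔
      ∀ m : ℕ, m ≤ M → ∀ w : Fin m → Fin d × Bool, wordProd w ≠ 1 →
        (wordEval S w ≠ 1 ∧ (↑(wordEval S w) : Matrix (Fin 2) (Fin 2) (ZMod p)) ≠ -1))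
    (m : ℕ) (hm : 1 ≤ m) (g : SL 2 p)
    (hg1 : g ≠ 1) (hg2 : (↑g : Matrix (Fin 2) (Fin 2) (ZMod p)) ≠ -1) :
    (∑ S ∈ F, (NWord S m g : ℝ)) ≤ 2 * F.card * (2 * d) ^ m / ((p : ℝ) ^ 2 - 1) := by
  haveI : Fact p.Prime := ⟨hp⟩
  classical
  set T : ℕ := ∑ S ∈ F, NWord S m g with hT
  -- F is closed under (inverse) conjugation
  have hFconj : ∀ (h : SL 2 p) (S : Fin d → SL 2 p), S ∈ F → (fun i => h * S i * h⁻¹) ∈ F := by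
    intro h S hS
    rw [hF] at hS ⊢
    intro m' hm' w hw
    obtain ⟨h1, h2⟩ := hS m' hm' w hw
    rw [wordEval_conj S h w]
    constructor
    · intro hcon
      exact h1 ((conj_one_iff h (wordEval S w)).1 hcon)
    · intro hcon
      exact h2 ((conj_eq_negOne_iff h (wordEval S w)).1 hcon)
  -- sum over F is conjugation-invariant in g
  have hsum : ∀ h : SL 2 p, ∑ S ∈ F, NWord S m (h * g * h⁻¹) = T := by
    intro h
    rw [hT]
    refine Finset.sum_nbij' (fun S => fun k => h⁻¹ * S k * h)
      (fun S => fun k => h * S k * h⁻¹) ?_ ?_ ?_ ?_ ?_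
    · intro S hS
      have := hFconj h⁻¹ S hS
      simpa using this
    · intro S hS
      exact hFconj h S hS
    · intro S _
      funext k
      simp [mul_assoc]
    · intro S _
      funext k
      simp [mul_assoc]
    · intro S _
      have := NWord_conj (fun k => h⁻¹ * S k * h) h g m
      simp only [← mul_assoc] at this
      rw [← this]
      congr 1
      funext k
      group
  set C := (Finset.univ : Finset (SL 2 p)).image (fun h => h * g * h⁻¹) with hC
  have hCT : C.card * T ≤ F.card * (2 * d) ^ m := by
    calc C.card * T = ∑ _g' ∈ C, T := by rw [Finset.sum_const, smul_eq_mul]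
      _ = ∑ g' ∈ C, ∑ S ∈ F, NWord S m g' := by
          refine Finset.sum_congr rfl fun g' hg' => ?_
          obtain ⟨h, -, rfl⟩ := Finset.mem_image.1 hg'
          exact (hsum h).symm
      _ ≤ ∑ g' : SL 2 p, ∑ S ∈ F, NWord S m g' :=
          Finset.sum_le_sum_of_subset (Finset.subset_univ C)
      _ = ∑ S ∈ F, ∑ g' : SL 2 p, NWord S m g' := Finset.sum_comm
      _ ≤ ∑ _S ∈ F, (2 * d) ^ m := Finset.sum_le_sum fun S _ => sum_NWord_le S m
      _ = F.card * (2 * d) ^ m := by rw [Finset.sum_const, smul_eq_mul]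
  have hC2 : p ^ 2 - 1 ≤ 2 * C.card := card_conj_ge g hg1 hg2
  have hkey : (p ^ 2 - 1) * T ≤ 2 * (F.card * (2 * d) ^ m) := by
    calc (p ^ 2 - 1) * T ≤ (2 * C.card) * T := Nat.mul_le_mul_right T hC2
      _ = 2 * (C.card * T) := by ring
      _ ≤ 2 * (F.card * (2 * d) ^ m) := Nat.mul_le_mul_left 2 hCT
  have hple : (2 : ℝ) ≤ (p : ℝ) := by exact_mod_cast hp.two_le
  have hppos : (0 : ℝ) < (p : ℝ) ^ 2 - 1 := by nlinarith
  rw [le_div_iff₀ hppos]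
  have hTcast : (∑ S ∈ F, (NWord S m g : ℝ)) = (T : ℝ) := by
    rw [hT]; push_cast; rfl
  rw [hTcast]
  have h1p2 : 1 ≤ p ^ 2 := by nlinarith [hp.two_le]
  have hcast : ((p ^ 2 - 1 : ℕ) : ℝ) = (p : ℝ) ^ 2 - 1 := by
    push_cast [Nat.cast_sub h1p2]
    ring
  calc (T : ℝ) * ((p : ℝ) ^ 2 - 1) = (((p ^ 2 - 1) * T : ℕ) : ℝ) := by
        rw [← hcast]; push_cast; ring
    _ ≤ ((2 * (F.card * (2 * d) ^ m) : ℕ) : ℝ) := by exact_mod_cast hkey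
    _ = 2 * F.card * (2 * (d : ℝ)) ^ m := by push_cast; ring
end

section
/- Let G be a finite group, d ≥ 2 and m ≥ 1 integers, π : G → U(n) a nontrivial irreducible unitary representation of dimension n, and K > 0 a real number. Let F ⊆ G^d be a nonempty family of tuples that is invariant under simultaneous conjugation (i.e., (h g₁ h⁻¹, …, h g_d h⁻¹) ∈ F whenever (g₁, …, g_d) ∈ F and h ∈ G) and such that for every S ∈ F and every nontrivial word w of length m, the conjugacy class in G of the evaluation w(S) has at least K elements. Then (1/|F|)·Σ_{S ∈ F} ((1/n)·tr(A_{π,S}^m) − N(d, m))² ≤ (2d)^{2m}·|G| / (K·n²). -/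
open MeasureTheory

section Aux

variable {G : Type*} [Group G] {n : ℕ} (π : G →* Matrix.unitaryGroup (Fin n) ℂ)

lemma schur (hirr : IsIrreducibleRep π) (hn : 0 < n) (T : Matrix (Fin n) (Fin n) ℂ)
    (hT : ∀ g : G, (π g : Matrix (Fin n) (Fin n) ℂ) * T = T * (π g : Matrix (Fin n) (Fin n) ℂ)) :
    ∃ c : ℂ, T = c • (1 : Matrix (Fin n) (Fin n) ℂ) := by
  have : Nontrivial (Fin n → ℂ) := by
    have : Nonempty (Fin n) := ⟨⟨0, hn⟩⟩
    infer_instance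
  obtain ⟨c, hc⟩ := Module.End.exists_eigenvalue (T.mulVecLin)
  refine ⟨c, ?_⟩
  obtain ⟨v, hv⟩ := hc.exists_hasEigenvector
  set W : Submodule ℂ (Fin n → ℂ) := LinearMap.ker ((T - c • 1).mulVecLin) with hW
  have hmem : ∀ u, u ∈ W ↔ T.mulVec u = c • u := by
    intro u
    simp [hW, LinearMap.mem_ker, Matrix.sub_mulVec, Matrix.smul_mulVec, sub_eq_zero,
      Matrix.one_mulVec]
  have hinv : ∀ g : G, ∀ u ∈ W, (π g : Matrix (Fin n) (Fin n) ℂ).mulVec u ∈ W := by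
    intro g u hu
    rw [hmem] at hu ⊢
    have h3 : T.mulVec ((π g : Matrix (Fin n) (Fin n) ℂ).mulVec u)
        = (T * (π g : Matrix (Fin n) (Fin n) ℂ)).mulVec u := by
      rw [Matrix.mulVec_mulVec]
    rw [h3, ← hT g, ← Matrix.mulVec_mulVec, hu, Matrix.mulVec_smul]
  have hWtop : W = ⊤ := by
    rcases hirr W hinv with h | h
    · exfalso
      have : v ∈ W := (hmem v).mpr hv.apply_eq_smul
      rw [h] at this
      exact hv.2 this
    · exact h
  ext i j
  have : (Pi.single j 1 : Fin n → ℂ) ∈ W := hWtop ▸ Submodule.mem_top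
  have h2 := (hmem _).mp this
  have := congrFun h2 i
  simpa [Matrix.mulVec_single, Matrix.one_apply, Pi.single_apply, mul_comm] using this

variable [Fintype G]

lemma key_avg (hirr : IsIrreducibleRep π) (hn : 0 < n) (E : Matrix (Fin n) (Fin n) ℂ) :
    ∃ c : ℂ, (∑ x : G, (π x : Matrix (Fin n) (Fin n) ℂ) * E * (π x⁻¹ : Matrix (Fin n) (Fin n) ℂ))
        = c • 1 ∧ (n : ℂ) * c = (Fintype.card G : ℂ) * E.trace := by
  classical
  have coe_mul : ∀ a b : G, ((π (a*b) : Matrix (Fin n) (Fin n) ℂ))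
      = (π a : Matrix (Fin n) (Fin n) ℂ) * (π b : Matrix (Fin n) (Fin n) ℂ) := fun a b => by
    rw [_root_.map_mul]; rfl
  have coe_one : ((π 1 : Matrix (Fin n) (Fin n) ℂ)) = 1 := by rw [_root_.map_one]; rfl
  set T := ∑ x : G, (π x : Matrix (Fin n) (Fin n) ℂ) * E * (π x⁻¹ : Matrix (Fin n) (Fin n) ℂ)
    with hTdef
  have hcomm : ∀ g : G, (π g : Matrix (Fin n) (Fin n) ℂ) * T
      = T * (π g : Matrix (Fin n) (Fin n) ℂ) := by
    intro g
    have h1 : T * (π g : Matrix (Fin n) (Fin n) ℂ)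
        = ∑ x : G, ((π (g * x) : Matrix (Fin n) (Fin n) ℂ) * E
            * (π (g*x)⁻¹ : Matrix (Fin n) (Fin n) ℂ)) * (π g : Matrix (Fin n) (Fin n) ℂ) := by
      rw [hTdef, Finset.sum_mul]
      exact (Fintype.sum_equiv (Equiv.mulLeft g) _ _ fun x => rfl).symm
    rw [h1, hTdef, Finset.mul_sum]
    refine Finset.sum_congr rfl fun x _ => ?_
    have e2 : (π ((g*x)⁻¹) : Matrix (Fin n) (Fin n) ℂ) * (π g : Matrix (Fin n) (Fin n) ℂ)
        = (π x⁻¹ : Matrix (Fin n) (Fin n) ℂ) := by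
      rw [← coe_mul]; congr 1; group
    have e3 : (π (g*x) : Matrix (Fin n) (Fin n) ℂ) * E * (π (g*x)⁻¹ : Matrix (Fin n) (Fin n) ℂ)
        * (π g : Matrix (Fin n) (Fin n) ℂ)
        = ((π g : Matrix (Fin n) (Fin n) ℂ) * (π x : Matrix (Fin n) (Fin n) ℂ)) * E
          * ((π ((g*x)⁻¹) : Matrix (Fin n) (Fin n) ℂ) * (π g : Matrix (Fin n) (Fin n) ℂ)) := by
      rw [coe_mul]; noncomm_ring
    rw [e3, e2]
    noncomm_ring
  obtain ⟨c, hc⟩ := schur π hirr hn T hcomm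
  refine ⟨c, hc, ?_⟩
  have htr : T.trace = (Fintype.card G : ℂ) * E.trace := by
    rw [hTdef, Matrix.trace_sum]
    have : ∀ x : G, ((π x : Matrix (Fin n) (Fin n) ℂ) * E
        * (π x⁻¹ : Matrix (Fin n) (Fin n) ℂ)).trace = E.trace := by
      intro x
      rw [Matrix.trace_mul_comm, ← mul_assoc, ← coe_mul, inv_mul_cancel, coe_one, one_mul]
    rw [Finset.sum_congr rfl fun x _ => this x, Finset.sum_const, Finset.card_univ,
      nsmul_eq_mul]
  rw [hc] at htr
  rw [Matrix.trace_smul, Matrix.trace_one, smul_eq_mul] at htr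
  rw [mul_comm]
  simpa using htr

lemma sum_char_sq (hirr : IsIrreducibleRep π) (hn : 0 < n) :
    ∑ x : G, (π x : Matrix (Fin n) (Fin n) ℂ).trace * (π x⁻¹ : Matrix (Fin n) (Fin n) ℂ).trace
      = (Fintype.card G : ℂ) := by
  classical
  have hne : (n : ℂ) ≠ 0 := Nat.cast_ne_zero.mpr hn.ne'
  have entry : ∀ i j : Fin n,
      ∑ x : G, (π x : Matrix (Fin n) (Fin n) ℂ) i i * (π x⁻¹ : Matrix (Fin n) (Fin n) ℂ) j j
        = if i = j then (Fintype.card G : ℂ) / n else 0 := by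
    intro i j
    obtain ⟨c, hc1, hc2⟩ := key_avg π hirr hn (Matrix.single i j 1)
    have h1 : ∀ x : G, ((π x : Matrix (Fin n) (Fin n) ℂ) * Matrix.single i j 1
        * (π x⁻¹ : Matrix (Fin n) (Fin n) ℂ) : Matrix (Fin n) (Fin n) ℂ) i j
        = (π x : Matrix (Fin n) (Fin n) ℂ) i i * (π x⁻¹ : Matrix (Fin n) (Fin n) ℂ) j j := by
      intro x
      rw [Matrix.mul_apply]
      rw [Finset.sum_eq_single j]
      · rw [Matrix.mul_single_apply_same, mul_one]
      · intro b _ hb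
        rw [Matrix.mul_single_apply_of_ne (c := 1) i j i b hb, zero_mul]
      · simp
    have h2 := congrFun (congrFun hc1 i) j
    rw [Matrix.sum_apply] at h2
    rw [Finset.sum_congr rfl fun x _ => h1 x] at h2
    rw [h2, Matrix.smul_apply, Matrix.one_apply]
    by_cases h : i = j
    · subst h
      rw [if_pos rfl, if_pos rfl, smul_eq_mul, mul_one, eq_div_iff hne]
      have htrE : (Matrix.single i i (1:ℂ)).trace = 1 := by
        simp [Matrix.trace, Matrix.diag, Matrix.single, Finset.sum_ite_eq]
      rw [htrE, mul_one] at hc2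
      linear_combination hc2
    · have hdiag : ∀ k : Fin n, (Matrix.single i j (1:ℂ)) k k = 0 := by
        intro k
        simp only [Matrix.single, Matrix.of_apply, ite_eq_right_iff, and_imp]
        rintro rfl rfl
        exact absurd rfl h
      have htrE : (Matrix.single i j (1:ℂ)).trace = 0 := by
        rw [Matrix.trace]
        exact Finset.sum_eq_zero fun k _ => hdiag k
      rw [htrE, mul_zero] at hc2
      have hc0 : c = 0 := (mul_eq_zero.mp hc2).resolve_left hne
      simp [h, hc0]
  have expand : ∀ x : G, (π x : Matrix (Fin n) (Fin n) ℂ).trace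
        * (π x⁻¹ : Matrix (Fin n) (Fin n) ℂ).trace
      = ∑ i : Fin n, ∑ j : Fin n,
          (π x : Matrix (Fin n) (Fin n) ℂ) i i * (π x⁻¹ : Matrix (Fin n) (Fin n) ℂ) j j := by
    intro x
    rw [Matrix.trace, Matrix.trace, Finset.sum_mul_sum]
    rfl
  rw [Finset.sum_congr rfl fun x _ => expand x, Finset.sum_comm]
  have swap2 : ∀ i : Fin n, ∑ x : G, ∑ j : Fin n,
        (π x : Matrix (Fin n) (Fin n) ℂ) i i * (π x⁻¹ : Matrix (Fin n) (Fin n) ℂ) j j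
      = ∑ j : Fin n, ∑ x : G,
        (π x : Matrix (Fin n) (Fin n) ℂ) i i * (π x⁻¹ : Matrix (Fin n) (Fin n) ℂ) j j :=
    fun i => Finset.sum_comm
  rw [Finset.sum_congr rfl fun i _ => swap2 i]
  have : ∀ i : Fin n, ∑ j : Fin n, ∑ x : G,
        (π x : Matrix (Fin n) (Fin n) ℂ) i i * (π x⁻¹ : Matrix (Fin n) (Fin n) ℂ) j j
      = (Fintype.card G : ℂ) / n := by
    intro i
    rw [Finset.sum_congr rfl fun j _ => entry i j]
    simp
  rw [Finset.sum_congr rfl fun i _ => this i, Finset.sum_const, Finset.card_univ,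
    Fintype.card_fin, nsmul_eq_mul]
  field_simp

omit [Fintype G] in
lemma char_inv (x : G) : (π x⁻¹ : Matrix (Fin n) (Fin n) ℂ).trace
    = (starRingEnd ℂ) (π x : Matrix (Fin n) (Fin n) ℂ).trace := by
  have : (π x⁻¹ : Matrix (Fin n) (Fin n) ℂ) = star (π x : Matrix (Fin n) (Fin n) ℂ) := by
    rw [map_inv]; rfl
  rw [this]
  exact Matrix.trace_conjTranspose _

lemma sum_normSq (hirr : IsIrreducibleRep π) (hn : 0 < n) :
    ∑ x : G, Complex.normSq ((π x : Matrix (Fin n) (Fin n) ℂ).trace) = (Fintype.card G : ℝ) := by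
  have h := sum_char_sq π hirr hn
  have h2 : ∀ x : G, (π x : Matrix (Fin n) (Fin n) ℂ).trace
      * (π x⁻¹ : Matrix (Fin n) (Fin n) ℂ).trace
      = (Complex.normSq ((π x : Matrix (Fin n) (Fin n) ℂ).trace) : ℂ) := by
    intro x
    rw [char_inv, Complex.mul_conj]
  rw [Finset.sum_congr rfl fun x _ => h2 x] at h
  exact_mod_cast h

lemma char_conj (g x : G) (hx : IsConj g x) :
    (π x : Matrix (Fin n) (Fin n) ℂ).trace = (π g : Matrix (Fin n) (Fin n) ℂ).trace := by
  obtain ⟨c, hc⟩ := isConj_iff.mp hx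
  subst hc
  have e1 : (π (c * g * c⁻¹) : Matrix (Fin n) (Fin n) ℂ)
      = (π c : Matrix (Fin n) (Fin n) ℂ) * (π g : Matrix (Fin n) (Fin n) ℂ)
        * (π c⁻¹ : Matrix (Fin n) (Fin n) ℂ) := by
    rw [_root_.map_mul, _root_.map_mul]; rfl
  rw [e1, Matrix.trace_mul_comm, ← mul_assoc]
  have e2 : (π c⁻¹ : Matrix (Fin n) (Fin n) ℂ) * (π c : Matrix (Fin n) (Fin n) ℂ) = 1 := by
    have h0 : π c⁻¹ * π c = 1 := by rw [← _root_.map_mul, inv_mul_cancel, _root_.map_one]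
    calc (π c⁻¹ : Matrix (Fin n) (Fin n) ℂ) * (π c : Matrix (Fin n) (Fin n) ℂ)
        = ((π c⁻¹ * π c : Matrix.unitaryGroup (Fin n) ℂ) : Matrix (Fin n) (Fin n) ℂ) := rfl
      _ = 1 := by rw [h0]; rfl
  rw [e2, one_mul]

lemma char_normSq_le (hirr : IsIrreducibleRep π) (hn : 0 < n) (g : G) (K : ℝ) (hK : 0 < K)
    (hcl : K ≤ (Nat.card {x : G // IsConj g x} : ℝ)) :
    Complex.normSq ((π g : Matrix (Fin n) (Fin n) ℂ).trace) ≤ (Fintype.card G : ℝ) / K := by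
  classical
  set C : Finset G := Finset.univ.filter (fun x => IsConj g x) with hC
  have hcard : (Nat.card {x : G // IsConj g x} : ℝ) = (C.card : ℝ) := by
    rw [Nat.card_eq_fintype_card, Fintype.card_subtype]
  have hsumC : ∑ x ∈ C, Complex.normSq ((π x : Matrix (Fin n) (Fin n) ℂ).trace)
      = C.card * Complex.normSq ((π g : Matrix (Fin n) (Fin n) ℂ).trace) := by
    rw [Finset.sum_congr rfl fun x hx => by
      rw [char_conj π g x (Finset.mem_filter.mp hx).2]]
    rw [Finset.sum_const, nsmul_eq_mul]
  have hle : ∑ x ∈ C, Complex.normSq ((π x : Matrix (Fin n) (Fin n) ℂ).trace)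
      ≤ (Fintype.card G : ℝ) := by
    rw [← sum_normSq π hirr hn]
    exact Finset.sum_le_sum_of_subset_of_nonneg (Finset.subset_univ C)
      (fun x _ _ => Complex.normSq_nonneg _)
  rw [hsumC] at hle
  rw [hcard] at hcl
  have hnn : 0 ≤ Complex.normSq ((π g : Matrix (Fin n) (Fin n) ℂ).trace) := Complex.normSq_nonneg _
  rw [le_div_iff₀ hK]
  calc Complex.normSq ((π g : Matrix (Fin n) (Fin n) ℂ).trace) * K
      ≤ Complex.normSq ((π g : Matrix (Fin n) (Fin n) ℂ).trace) * C.card := by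
        exact mul_le_mul_of_nonneg_left hcl hnn
    _ ≤ (Fintype.card G : ℝ) := by rw [mul_comm]; exact hle


omit [Fintype G] in
lemma coe_one' : ((π 1 : Matrix (Fin n) (Fin n) ℂ)) = 1 := by rw [_root_.map_one]; rfl

omit [Fintype G] in
lemma coe_mul' (a b : G) : ((π (a*b) : Matrix (Fin n) (Fin n) ℂ))
    = (π a : Matrix (Fin n) (Fin n) ℂ) * (π b : Matrix (Fin n) (Fin n) ℂ) := by
  rw [_root_.map_mul]; rfl

omit [Fintype G] in
lemma amat_eq {d : ℕ} (S : Fin d → G) :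
    Amat π S = ∑ p : Fin d × Bool,
      (π (if p.2 then S p.1 else (S p.1)⁻¹) : Matrix (Fin n) (Fin n) ℂ) := by
  rw [Fintype.sum_prod_type, Amat]
  refine Finset.sum_congr rfl fun i _ => ?_
  rw [Fintype.sum_bool]
  have e1 : (π (if (true : Bool) then S i else (S i)⁻¹) : Matrix (Fin n) (Fin n) ℂ)
      = ((π (S i) : Matrix (Fin n) (Fin n) ℂ)) := rfl
  have e2 : (π (if (false : Bool) then S i else (S i)⁻¹) : Matrix (Fin n) (Fin n) ℂ)
      = ((π ((S i)⁻¹) : Matrix (Fin n) (Fin n) ℂ)) := rfl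
  rw [e1, e2]
  congr 1
  refine Matrix.inv_eq_left_inv ?_
  rw [← coe_mul' π, inv_mul_cancel, coe_one' π]

omit [Fintype G] in
lemma wordEval_cons {d m : ℕ} (S : Fin d → G) (p : Fin d × Bool) (w : Fin m → Fin d × Bool) :
    wordEval S (Fin.cons p w) = (if p.2 then S p.1 else (S p.1)⁻¹) * wordEval S w := by
  simp only [wordEval, List.ofFn_succ, List.prod_cons, Fin.cons_zero, Fin.cons_succ]

omit [Fintype G] in
lemma amat_pow {d : ℕ} (S : Fin d → G) : ∀ m : ℕ,
    Amat π S ^ m = ∑ w : Fin m → Fin d × Bool, (π (wordEval S w) : Matrix (Fin n) (Fin n) ℂ)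
  | 0 => by
    have h0 : ∀ w : Fin 0 → Fin d × Bool, wordEval S w = 1 := fun w => by
      simp [wordEval]
    rw [pow_zero, Finset.sum_congr rfl fun w _ => by rw [h0 w, coe_one' π],
      Finset.sum_const, Finset.card_univ]
    simp
  | (m+1) => by
    rw [pow_succ', amat_pow S m, amat_eq π S, Finset.sum_mul_sum]
    have he : ∑ w' : Fin (m+1) → Fin d × Bool,
          (π (wordEval S w') : Matrix (Fin n) (Fin n) ℂ)
        = ∑ p : Fin d × Bool, ∑ w : Fin m → Fin d × Bool,
            (π (wordEval S (Fin.cons p w)) : Matrix (Fin n) (Fin n) ℂ) :=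
      calc ∑ w' : Fin (m+1) → Fin d × Bool, (π (wordEval S w') : Matrix (Fin n) (Fin n) ℂ)
          = ∑ q : (Fin d × Bool) × (Fin m → Fin d × Bool),
              (π (wordEval S (Fin.cons q.1 q.2)) : Matrix (Fin n) (Fin n) ℂ) :=
            (Fintype.sum_equiv (Fin.consEquiv (fun _ => Fin d × Bool)) _ _ (fun q => rfl)).symm
        _ = ∑ p : Fin d × Bool, ∑ w : Fin m → Fin d × Bool,
              (π (wordEval S (Fin.cons p w)) : Matrix (Fin n) (Fin n) ℂ) :=
            Fintype.sum_prod_type _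
    rw [he]
    refine Finset.sum_congr rfl fun p _ => Finset.sum_congr rfl fun w _ => ?_
    rw [wordEval_cons, coe_mul']

omit [Fintype G] in
lemma wordEval_eq_one {d m : ℕ} (S : Fin d → G) (w : Fin m → Fin d × Bool)
    (h : wordProd w = 1) : wordEval S w = 1 := by
  have hfun : (fun j => if (w j).2 then S (w j).1 else (S (w j).1)⁻¹)
      = (⇑(FreeGroup.lift S) ∘ fun j =>
          if (w j).2 then FreeGroup.of (w j).1 else (FreeGroup.of (w j).1)⁻¹) := by
    funext j
    by_cases hb : (w j).2 <;> simp [hb, Function.comp]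
  have : wordEval S w = FreeGroup.lift S (wordProd w) := by
    rw [wordEval, wordProd, map_list_prod, List.map_ofFn, hfun]
  rw [this, h, _root_.map_one]

end Aux

/-- Let G be a finite group, d ≥ 2, m ≥ 1, π a nontrivial irreducible unitary
representation of dimension n, K > 0, and F ⊆ G^d a nonempty family invariant under simultaneous
conjugation such that for every S ∈ F and every nontrivial word w of length m, the conjugacy
class of w(S) has at least K elements. Then
(1/|F|)·Σ_{S ∈ F} ((1/n)·tr(A_{π,S}^m) − N(d,m))² ≤ (2d)^{2m}·|G| / (K·n²). -/
theorem stmt10 {G : Type*} [Group G] [Fintype G] (d m : ℕ) (hd : 2 ≤ d) (hm : 1 ≤ m)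
    (n : ℕ) (π : G →* Matrix.unitaryGroup (Fin n) ℂ)
    (hirr : IsIrreducibleRep π) (hnt : ∃ g, π g ≠ 1)
    (K : ℝ) (hK : 0 < K)
    (F : Finset (Fin d → G)) (hFne : F.Nonempty)
    (hconj : ∀ S ∈ F, ∀ h : G, (fun i => h * S i * h⁻¹) ∈ F)
    (hclass : ∀ S ∈ F, ∀ w : Fin m → Fin d × Bool, wordProd w ≠ 1 →
      K ≤ (Nat.card {x : G // IsConj (wordEval S w) x} : ℝ)) :
    (1 / (F.card : ℝ)) *
        ∑ S ∈ F, ((Amat π S ^ m).trace.re / n - (Ntriv d m : ℝ)) ^ 2 ≤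
      (2 * d : ℝ) ^ (2 * m) * (Fintype.card G : ℝ) / (K * (n : ℝ) ^ 2) := by
  classical
  have hn : 0 < n := by
    rcases Nat.eq_zero_or_pos n with h | h
    · subst h
      obtain ⟨g, hg⟩ := hnt
      exact absurd (Subtype.ext (by funext i; exact i.elim0)) hg
    · exact h
  have hnR : (0:ℝ) < n := by exact_mod_cast hn
  have hnne : (n:ℝ) ≠ 0 := hnR.ne'
  set Q : ℝ := (Fintype.card G : ℝ) / K with hQdef
  have hQ0 : 0 ≤ Q := div_nonneg (Nat.cast_nonneg _) hK.le
  set B : ℝ := (2 * d : ℝ) ^ (2 * m) * (Fintype.card G : ℝ) / (K * (n : ℝ) ^ 2) with hBdef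
  have key : ∀ S ∈ F, ((Amat π S ^ m).trace.re / n - (Ntriv d m : ℝ)) ^ 2 ≤ B := by
    intro S hS
    have hexp : (Amat π S ^ m).trace = ∑ w : Fin m → Fin d × Bool,
        (π (wordEval S w) : Matrix (Fin n) (Fin n) ℂ).trace := by
      rw [amat_pow π S m, Matrix.trace_sum]
    set W1 : Finset (Fin m → Fin d × Bool) := Finset.univ.filter fun w => wordProd w = 1
      with hW1
    set W2 : Finset (Fin m → Fin d × Bool) := Finset.univ.filter fun w => ¬ wordProd w = 1
      with hW2
    have hsplit : (Amat π S ^ m).trace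
        = ∑ w ∈ W1, (π (wordEval S w) : Matrix (Fin n) (Fin n) ℂ).trace
          + ∑ w ∈ W2, (π (wordEval S w) : Matrix (Fin n) (Fin n) ℂ).trace := by
      rw [hexp, ← Finset.sum_filter_add_sum_filter_not Finset.univ fun w => wordProd w = 1]
    have h1 : ∀ w ∈ W1, (π (wordEval S w) : Matrix (Fin n) (Fin n) ℂ).trace = (n : ℂ) := by
      intro w hw
      rw [wordEval_eq_one S w (Finset.mem_filter.mp hw).2, coe_one', Matrix.trace_one]
      simp
    have hNcard : (W1.card : ℝ) = (Ntriv d m : ℝ) := by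
      rw [Ntriv, Nat.card_eq_fintype_card, Fintype.card_subtype]
    have hsum1 : ∑ w ∈ W1, (π (wordEval S w) : Matrix (Fin n) (Fin n) ℂ).trace
        = (W1.card : ℂ) * (n : ℂ) := by
      rw [Finset.sum_congr rfl h1, Finset.sum_const, nsmul_eq_mul]
    set x : ℝ := ∑ w ∈ W2, ((π (wordEval S w) : Matrix (Fin n) (Fin n) ℂ).trace).re with hx
    have hre : (Amat π S ^ m).trace.re = (Ntriv d m : ℝ) * n + x := by
      rw [hsplit, Complex.add_re, hsum1, hx, Complex.re_sum]
      congr 1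
      rw [← hNcard]
      simp [Complex.mul_re]
    have hterm : ∀ w ∈ W2, |((π (wordEval S w) : Matrix (Fin n) (Fin n) ℂ).trace).re|
        ≤ Real.sqrt Q := by
      intro w hw
      have hns := char_normSq_le π hirr hn (wordEval S w) K hK
        (hclass S hS w (Finset.mem_filter.mp hw).2)
      have h2 : ‖(π (wordEval S w) : Matrix (Fin n) (Fin n) ℂ).trace‖
          ≤ Real.sqrt Q := by
        rw [Complex.norm_def]
        exact Real.sqrt_le_sqrt hns
      exact le_trans (Complex.abs_re_le_norm _) h2
    have hcardW2 : (W2.card : ℝ) ≤ (2 * d : ℝ) ^ m := by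
      have h3 : W2.card ≤ Fintype.card (Fin m → Fin d × Bool) :=
        le_trans (Finset.card_le_card (Finset.subset_univ _)) (le_of_eq (Finset.card_univ))
      have h4 : Fintype.card (Fin m → Fin d × Bool) = (2 * d) ^ m := by
        rw [Fintype.card_fun]
        simp [mul_comm]
      calc (W2.card : ℝ) ≤ (Fintype.card (Fin m → Fin d × Bool) : ℝ) := by exact_mod_cast h3
        _ = (2 * d : ℝ) ^ m := by rw [h4]; push_cast; ring
    have habs : |x| ≤ (2 * d : ℝ) ^ m * Real.sqrt Q := by
      calc |x| ≤ ∑ w ∈ W2, |((π (wordEval S w) : Matrix (Fin n) (Fin n) ℂ).trace).re| :=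
            Finset.abs_sum_le_sum_abs _ _
        _ ≤ ∑ _w ∈ W2, Real.sqrt Q := Finset.sum_le_sum hterm
        _ = (W2.card : ℝ) * Real.sqrt Q := by rw [Finset.sum_const, nsmul_eq_mul]
        _ ≤ (2 * d : ℝ) ^ m * Real.sqrt Q :=
            mul_le_mul_of_nonneg_right hcardW2 (Real.sqrt_nonneg _)
    have hdiff : (Amat π S ^ m).trace.re / n - (Ntriv d m : ℝ) = x / n := by
      rw [hre]
      field_simp
      ring
    rw [hdiff, div_pow]
    have hx2 : x ^ 2 ≤ (2 * d : ℝ) ^ (2 * m) * Q := by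
      have := pow_le_pow_left₀ (abs_nonneg x) habs 2
      rw [sq_abs] at this
      calc x ^ 2 ≤ ((2 * d : ℝ) ^ m * Real.sqrt Q) ^ 2 := this
        _ = ((2 * d : ℝ) ^ m) ^ 2 * Real.sqrt Q ^ 2 := by ring
        _ = (2 * d : ℝ) ^ (2 * m) * Q := by
            rw [Real.sq_sqrt hQ0, ← pow_mul, mul_comm m 2]
    have hBQ : (2 * d : ℝ) ^ (2*m) * (Fintype.card G : ℝ) / (K * (n:ℝ)^2)
        = ((2 * d : ℝ) ^ (2*m) * Q) / (n:ℝ)^2 := by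
      rw [hQdef]
      field_simp
    rw [hBdef, hBQ]
    gcongr
  have hFpos : (0:ℝ) < F.card := by
    exact_mod_cast Finset.card_pos.mpr hFne
  have hsum := Finset.sum_le_card_nsmul F _ B key
  rw [nsmul_eq_mul] at hsum
  calc (1 / (F.card : ℝ)) *
        ∑ S ∈ F, ((Amat π S ^ m).trace.re / n - (Ntriv d m : ℝ)) ^ 2
      ≤ (1 / (F.card : ℝ)) * ((F.card : ℝ) * B) :=
        mul_le_mul_of_nonneg_left hsum (by positivity)
    _ = B := by field_simp
end
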